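/- A lax symmetric monoidal functor F: Span(Spaces^{π-finite p}) → C that preserves π-finite p-space colimits and whose restriction along the canonical symmetric monoidal functor Spaces^{π-finite p} → Span(Spaces^{π-finite p}) is strong symmetric monoidal, is itself strong symmetric monoidal. -/
import Mathlib

open CategoryTheory

structure ColimitPreservationData (Spn C : Type*) [Category Spn] [Category C]
    (F : Spn ⥤ C) where
  /-- π-finite p-spaces -/
  Space : Type*
  /-- `A`-indexed diagrams in `Spn` -/
  Diag : Space → Spn → Type*
  /-- the colimit in `Spn` of an `A`-indexed diagram -/
  colimSpn : ∀ {A Z}, Diag A Z → Spn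
  /-- the colimit in `C` of the image diagram -/
  colimC : ∀ {A Z}, Diag A Z → C
  /-- the assembly map `colim_A F(X_•) → F(colim_A X_•)` -/
  assembly : ∀ {A Z} (X : Diag A Z), colimC X ⟶ F.obj (colimSpn X)

theorem strong_monoidal_of_restriction_strong
    (Sp Spn C : Type*) [Category Sp] [Category Spn] [Category C]
    [MonoidalCategory Sp] [MonoidalCategory Spn] [MonoidalCategory C]
    [SymmetricCategory Sp] [SymmetricCategory Spn] [SymmetricCategory C]
    -- the canonical symmetric monoidal functor, which is essentially surjective
    (ι : Sp ⥤ Spn) [ι.Braided] [ι.EssSurj]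
    -- the lax symmetric monoidal functor `F`
    (F : Spn ⥤ C) [F.LaxBraided]
    -- `F` preserves π-finite p-space colimits
    (P : ColimitPreservationData Spn C F)
    (hP : ∀ {A Z} (X : P.Diag A Z), IsIso (P.assembly X))
    -- the restriction `ι ⋙ F` is strong symmetric monoidal
    (hε : IsIso (Functor.LaxMonoidal.ε (ι ⋙ F)))
    (hμ : ∀ A B : Sp, IsIso (Functor.LaxMonoidal.μ (ι ⋙ F) A B)) :
    IsIso (Functor.LaxMonoidal.ε F) ∧
      ∀ X Y : Spn, IsIso (Functor.LaxMonoidal.μ F X Y) := by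
  open Functor.LaxMonoidal in
  constructor
  · rw [comp_ε] at hε
    exact IsIso.of_isIso_comp_right _ (F.map (ε ι))
  · intro X Y
    obtain ⟨A, ⟨eA⟩⟩ : ∃ A, Nonempty (ι.obj A ≅ X) := ⟨_, ⟨ι.objObjPreimageIso X⟩⟩
    obtain ⟨B, ⟨eB⟩⟩ : ∃ B, Nonempty (ι.obj B ≅ Y) := ⟨_, ⟨ι.objObjPreimageIso Y⟩⟩
    have hnat := μ_natural F eA.hom eB.hom
    have h1 : IsIso (μ (ι ⋙ F) A B) := hμ A B
    rw [comp_μ] at h1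
    have h2 : IsIso (μ F (ι.obj A) (ι.obj B)) :=
      IsIso.of_isIso_comp_right _ (F.map (μ ι A B))
    have : IsIso ((MonoidalCategory.tensorHom (F.map eA.hom) (F.map eB.hom)) ≫
        μ F X Y) := by rw [hnat]; infer_instance
    exact IsIso.of_isIso_comp_left (MonoidalCategory.tensorHom (F.map eA.hom) (F.map eB.hom)) _
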